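/- Let c ∈ ℝⁿ have nonnegative entries and let F denote the (unnormalized) discrete Fourier transform on ℂⁿ. Define Z_c = {z ∈ ℂⁿ : |F(z)[j]| = c[j] for all j}. Then for every x ∈ ℂⁿ, min_{z ∈ Z_c} ½‖x − z‖₂² = (1/(2n)) Σⱼ (|F(x)[j]| − c[j])². -/

import Mathlib

/-- Unnormalized discrete Fourier transform on `ℂⁿ`. -/
noncomputable def dft (n : ℕ) (x : EuclideanSpace ℂ (Fin n)) : EuclideanSpace ℂ (Fin n) :=
  WithLp.toLp 2 fun j => ∑ t : Fin n, x t *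
    Complex.exp (-2 * Real.pi * Complex.I * (j : ℕ) * (t : ℕ) / n)

noncomputable def idft (n : ℕ) (y : EuclideanSpace ℂ (Fin n)) : EuclideanSpace ℂ (Fin n) :=
  WithLp.toLp 2 fun t => (1/(n:ℂ)) * ∑ j : Fin n, y j *
    Complex.exp (2 * Real.pi * Complex.I * (j : ℕ) * (t : ℕ) / n)

lemma exp_sum_zero {n : ℕ} (hn : 0 < n) {m : ℤ} (hm : ¬ (n:ℤ) ∣ m) :
    ∑ t : Fin n, Complex.exp (2 * Real.pi * Complex.I * m * t / n) = 0 := by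
  set ω : ℂ := Complex.exp (2 * Real.pi * Complex.I * m / n) with hω
  have hne : (n:ℂ) ≠ 0 := Nat.cast_ne_zero.mpr hn.ne'
  have h1 : ∀ t : Fin n, Complex.exp (2 * Real.pi * Complex.I * m * t / n) = ω ^ (t:ℕ) := by
    intro t
    rw [hω, ← Complex.exp_nat_mul]
    ring_nf
  have hωn : ω ^ n = 1 := by
    rw [hω, ← Complex.exp_nat_mul]
    have : (n:ℂ) * (2 * Real.pi * Complex.I * m / n) = m * (2 * Real.pi * Complex.I) := by
      field_simp
    rw [this]
    simp
  have hω1 : ω ≠ 1 := by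
    intro h
    rw [hω, Complex.exp_eq_one_iff] at h
    obtain ⟨k, hk⟩ := h
    apply hm
    refine ⟨k, ?_⟩
    have h2 : (2:ℂ) * Real.pi * Complex.I ≠ 0 := by
      simp [Real.pi_ne_zero, Complex.I_ne_zero]
    have h3 : (m:ℂ) = (n * k : ℤ) := by
      push_cast
      apply mul_left_cancel₀ h2
      field_simp at hk
      linear_combination (2 * ↑Real.pi * Complex.I) * hk
    exact_mod_cast h3
  simp_rw [h1]
  rw [Fin.sum_univ_eq_sum_range (fun t => ω ^ t), geom_sum_eq hω1, hωn]
  simp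

set_option maxHeartbeats 1000000 in
lemma kernel_sum {n : ℕ} (hn : 0 < n) (j k : Fin n) :
    ∑ t : Fin n, Complex.exp (2 * Real.pi * Complex.I * ((j:ℤ) - (k:ℤ)) * t / n)
      = if j = k then (n:ℂ) else 0 := by
  by_cases h : j = k
  · subst h
    rw [if_pos rfl]
    have : ∀ t : Fin n,
        Complex.exp (2 * Real.pi * Complex.I * ((j:ℤ) - (j:ℤ)) * t / n) = 1 := by
      intro t
      simp only [sub_self, Int.cast_zero, mul_zero, zero_mul, zero_div, Complex.exp_zero]
    rw [Finset.sum_congr rfl (fun t _ => this t)]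
    simp only [Finset.sum_const, Finset.card_univ, Fintype.card_fin, nsmul_eq_mul, mul_one]
  · rw [if_neg h]
    have hnd : ¬ (n:ℤ) ∣ ((j:ℤ) - (k:ℤ)) := by
      intro hd
      have hj : (j:ℤ) < n := by exact_mod_cast j.2
      have hk : (k:ℤ) < n := by exact_mod_cast k.2
      have hj0 : (0:ℤ) ≤ j := Int.ofNat_nonneg _
      have hk0 : (0:ℤ) ≤ k := Int.ofNat_nonneg _
      have hz : (j:ℤ) - k = 0 := by
        rcases hd with ⟨a, ha⟩
        have ha0 : a = 0 := by nlinarith [ha]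
        rw [ha0, mul_zero] at ha
        exact ha
      apply h
      have : (j:ℤ) = k := by omega
      exact Fin.ext (by exact_mod_cast this)
    have he := exp_sum_zero hn hnd
    push_cast at he
    exact he

lemma conj_exp_dft {n : ℕ} (j t : Fin n) :
    (starRingEnd ℂ) (Complex.exp (-2 * Real.pi * Complex.I * (j : ℕ) * (t : ℕ) / n))
      = Complex.exp (2 * Real.pi * Complex.I * (j : ℕ) * (t : ℕ) / n) := by
  rw [← Complex.exp_conj]
  congr 1
  simp [map_div₀, Complex.conj_I, map_ofNat]

lemma exp_combine {n : ℕ} (j k t : Fin n) :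
    Complex.exp (2 * Real.pi * Complex.I * (j : ℕ) * (t : ℕ) / n) *
      Complex.exp (-2 * Real.pi * Complex.I * (k : ℕ) * (t : ℕ) / n)
    = Complex.exp (2 * Real.pi * Complex.I * ((j:ℤ) - (k:ℤ)) * t / n) := by
  rw [← Complex.exp_add]
  congr 1
  push_cast
  ring

lemma parseval {n : ℕ} (hn : 0 < n) (u : EuclideanSpace ℂ (Fin n)) :
    ∑ j : Fin n, Complex.normSq (dft n u j) = n * ∑ t : Fin n, Complex.normSq (u t) := by
  have key : ∑ j : Fin n, (dft n u j * (starRingEnd ℂ) (dft n u j))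
      = n * ∑ t : Fin n, (u t * (starRingEnd ℂ) (u t)) := by
    have step1 : ∑ j : Fin n, (dft n u j * (starRingEnd ℂ) (dft n u j))
        = ∑ j : Fin n, ∑ s : Fin n, ∑ t : Fin n, (u s * (starRingEnd ℂ) (u t)) *
            (Complex.exp (2 * Real.pi * Complex.I * (t:ℕ) * (j:ℕ) / n) *
             Complex.exp (-2 * Real.pi * Complex.I * (s:ℕ) * (j:ℕ) / n)) := by
      refine Finset.sum_congr rfl fun j _ => ?_
      unfold dft
      simp only [PiLp.toLp_apply]
      rw [map_sum, Finset.sum_mul_sum]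
      refine Finset.sum_congr rfl fun s _ => Finset.sum_congr rfl fun t _ => ?_
      rw [map_mul, conj_exp_dft]
      ring
    rw [step1]
    rw [Finset.sum_comm]
    have step2 : ∀ s : Fin n,
        ∑ j : Fin n, ∑ t : Fin n, (u s * (starRingEnd ℂ) (u t)) *
            (Complex.exp (2 * Real.pi * Complex.I * (t:ℕ) * (j:ℕ) / n) *
             Complex.exp (-2 * Real.pi * Complex.I * (s:ℕ) * (j:ℕ) / n))
        = ∑ t : Fin n, (u s * (starRingEnd ℂ) (u t)) *
            (if t = s then (n:ℂ) else 0) := by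
      intro s
      rw [Finset.sum_comm]
      refine Finset.sum_congr rfl fun t _ => ?_
      rw [← Finset.mul_sum]
      congr 1
      rw [← kernel_sum hn t s]
      exact Finset.sum_congr rfl fun j _ => exp_combine t s j
    rw [Finset.sum_congr rfl fun s _ => step2 s]
    rw [Finset.mul_sum]
    refine Finset.sum_congr rfl fun s _ => ?_
    simp [Finset.sum_ite_eq']
    ring
  have key2 := key
  simp_rw [Complex.mul_conj] at key2
  exact_mod_cast key2

lemma dft_idft {n : ℕ} (hn : 0 < n) (y : EuclideanSpace ℂ (Fin n)) :
    dft n (idft n y) = y := by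
  have hne : (n:ℂ) ≠ 0 := Nat.cast_ne_zero.mpr hn.ne'
  ext k
  show (∑ t : Fin n, idft n y t *
    Complex.exp (-2 * Real.pi * Complex.I * (k : ℕ) * (t : ℕ) / n)) = y k
  have step1 : ∀ t : Fin n, idft n y t *
      Complex.exp (-2 * Real.pi * Complex.I * (k : ℕ) * (t : ℕ) / n)
      = (1/(n:ℂ)) * ∑ j : Fin n, y j *
          Complex.exp (2 * Real.pi * Complex.I * ((j:ℤ) - (k:ℤ)) * t / n) := by
    intro t
    show ((1/(n:ℂ)) * ∑ j : Fin n, y j *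
        Complex.exp (2 * Real.pi * Complex.I * (j : ℕ) * (t : ℕ) / n)) * _ = _
    rw [mul_assoc, Finset.sum_mul]
    congr 1
    refine Finset.sum_congr rfl fun j _ => ?_
    rw [mul_assoc, exp_combine j k t]
  rw [Finset.sum_congr rfl fun t _ => step1 t, ← Finset.mul_sum, Finset.sum_comm]
  simp_rw [← Finset.mul_sum]
  rw [Finset.sum_congr rfl fun j _ => by rw [kernel_sum hn j k]]
  simp [Finset.sum_ite_eq']
  field_simp

lemma norm_sq_eq {n : ℕ} (v : EuclideanSpace ℂ (Fin n)) :
    ‖v‖^2 = ∑ i, Complex.normSq (v i) := by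
  rw [EuclideanSpace.norm_eq, Real.sq_sqrt (by positivity)]
  refine Finset.sum_congr rfl fun i _ => ?_
  rw [Complex.sq_norm]

lemma dft_sub {n : ℕ} (x z : EuclideanSpace ℂ (Fin n)) (j : Fin n) :
    dft n (x - z) j = dft n x j - dft n z j := by
  unfold dft
  simp only [PiLp.toLp_apply]
  rw [← Finset.sum_sub_distrib]
  refine Finset.sum_congr rfl fun t _ => ?_
  have : (x - z) t = x t - z t := rfl
  rw [this, sub_mul]

lemma point_eq {a : ℂ} {c : ℝ} (hc : 0 ≤ c) :
    Complex.normSq (a - (if a = 0 then (c:ℂ) else ((c / ‖a‖ : ℝ) : ℂ) * a))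
      = (‖a‖ - c)^2 := by
  by_cases h : a = 0
  · simp [h, Complex.normSq_ofReal]
    ring
  · rw [if_neg h]
    have ha : 0 < ‖a‖ := norm_pos_iff.mpr h
    have h1 : a - ((c / ‖a‖ : ℝ) : ℂ) * a = ((1 - c / ‖a‖ : ℝ) : ℂ) * a := by
      push_cast
      ring
    rw [h1, Complex.normSq_eq_norm_sq, norm_mul, Complex.norm_real, Real.norm_eq_abs, mul_pow, sq_abs]
    field_simp

/-- for `c ≥ 0` and `Z_c = {z : |F(z)[j]| = c[j] ∀j}`,
`min_{z ∈ Z_c} ½‖x − z‖² = (1/(2n)) Σⱼ (|F(x)[j]| − c[j])²`, the minimum being attained. -/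
theorem dist_to_modulus_set (n : ℕ) (hn : 0 < n) (c : Fin n → ℝ) (hc : ∀ j, 0 ≤ c j)
    (x : EuclideanSpace ℂ (Fin n)) :
    IsLeast ((fun z => 1/2 * ‖x - z‖^2) ''
        {z : EuclideanSpace ℂ (Fin n) | ∀ j, ‖dft n z j‖ = c j})
      (1/(2*n) * ∑ j, (‖dft n x j‖ - c j)^2) := by
  have hnR : (0:ℝ) < n := by exact_mod_cast hn
  constructor
  · -- membership: attained at idft of the phase-matched point
    set w : EuclideanSpace ℂ (Fin n) := WithLp.toLp 2 fun j =>
      if dft n x j = 0 then ((c j : ℝ) : ℂ)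
      else ((c j / ‖dft n x j‖ : ℝ) : ℂ) * dft n x j with hw
    refine ⟨idft n w, ?_, ?_⟩
    · intro j
      rw [dft_idft hn]
      by_cases h : dft n x j = 0
      · simp [hw, h, abs_of_nonneg (hc j)]
      · have ha : 0 < ‖dft n x j‖ := norm_pos_iff.mpr h
        simp only [hw, PiLp.toLp_apply, if_neg h]
        rw [norm_mul, Complex.norm_real, Real.norm_eq_abs,
          abs_of_nonneg (div_nonneg (hc j) (norm_nonneg _))]
        field_simp
    · show 1/2 * ‖x - idft n w‖^2 = _
      have h1 : ‖x - idft n w‖^2 = ∑ i, Complex.normSq ((x - idft n w) i) :=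
        norm_sq_eq _
      have h2 : (n:ℝ) * ∑ i, Complex.normSq ((x - idft n w) i)
          = ∑ j, Complex.normSq (dft n x j - w j) := by
        rw [← parseval hn]
        refine Finset.sum_congr rfl fun j _ => ?_
        rw [dft_sub, dft_idft hn]
      have h3 : ∀ j, Complex.normSq (dft n x j - w j)
          = (‖dft n x j‖ - c j)^2 := by
        intro j
        rw [hw]
        exact point_eq (hc j)
      have h4 : (n:ℝ) * ‖x - idft n w‖^2 = ∑ j, (‖dft n x j‖ - c j)^2 := by
        rw [h1, h2]
        exact Finset.sum_congr rfl fun j _ => h3 j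
      field_simp
      linarith [h4]
  · rintro v ⟨z, hz, rfl⟩
    show 1/(2*(n:ℝ)) * ∑ j, (‖dft n x j‖ - c j)^2 ≤ 1/2 * ‖x - z‖^2
    have h1 : (n:ℝ) * ‖x - z‖^2 = ∑ j, Complex.normSq (dft n x j - dft n z j) := by
      rw [norm_sq_eq, ← parseval hn]
      exact Finset.sum_congr rfl fun j _ => by rw [dft_sub]
    have h2 : ∀ j, (‖dft n x j‖ - c j)^2
        ≤ Complex.normSq (dft n x j - dft n z j) := by
      intro j
      rw [← hz j, Complex.normSq_eq_norm_sq]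
      have habs : |‖dft n x j‖ - ‖dft n z j‖|
          ≤ ‖dft n x j - dft n z j‖ :=
        abs_norm_sub_norm_le _ _
      have h5 := abs_le.mp habs
      nlinarith [norm_nonneg (dft n x j - dft n z j)]
    have h3 : ∑ j, (‖dft n x j‖ - c j)^2
        ≤ ∑ j, Complex.normSq (dft n x j - dft n z j) :=
      Finset.sum_le_sum fun j _ => h2 j
    rw [← h1] at h3
    rw [div_mul_eq_mul_div, div_le_iff₀ (by positivity)]
    nlinarith [h3]
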